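/- Let (a_ℓ)_{ℓ≥1} be a finitely supported family of nonnegative reals, A := Σ_ℓ a_ℓ, and M := max_ℓ a_ℓ. For s ≥ 1 let W_s := Σ a_{ℓ₁}·a_{ℓ₂}⋯a_{ℓ_s}, where the sum runs over tuples (ℓ₁,…,ℓ_s) with ℓ_{k+1} ≥ ℓ_k + 2 for all 1 ≤ k ≤ s−1. Then 0 ≤ A^s − s!·W_s ≤ 3·s²·M·A^{s−1}. -/

import Mathlib

open Finset

private lemma sum_biUnion_le_aux {ι α : Type*} [DecidableEq α] (I : Finset ι)
    (B : ι → Finset α) (F : α → ℝ) (hF : ∀ x, 0 ≤ F x) :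
    ∑ x ∈ I.biUnion B, F x ≤ ∑ p ∈ I, ∑ x ∈ B p, F x := by
  classical
  induction I using Finset.induction_on with
  | empty => simp
  | insert b I' ha ih =>
    rw [Finset.biUnion_insert, Finset.sum_insert ha]
    have h1 : ∑ x ∈ B b ∪ I'.biUnion B, F x
        = ∑ x ∈ B b, F x + ∑ x ∈ (I'.biUnion B) \ B b, F x := by
      rw [← Finset.sum_union (Finset.disjoint_sdiff), Finset.union_sdiff_self_eq_union]
    have h2 : ∑ x ∈ (I'.biUnion B) \ B b, F x ≤ ∑ x ∈ I'.biUnion B, F x :=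
      Finset.sum_le_sum_of_subset_of_nonneg (Finset.sdiff_subset) (fun x _ _ => hF x)
    linarith [ih]

set_option maxHeartbeats 1000000 in
/-- For a finitely supported nonnegative family `(a_ℓ)_{ℓ≥1}` with sum `A` and maximum
`M`, and `W_s` the sum of products `a_{ℓ₁}⋯a_{ℓ_s}` over tuples with consecutive gaps
at least `2`, one has `0 ≤ A^s − s!·W_s ≤ 3·s²·M·A^{s−1}`. -/
theorem separated_tuple_sum_bound (a : ℕ → ℝ) (ha : ∀ ℓ, 0 ≤ a ℓ) (ha0 : a 0 = 0)
    (hfin : (Function.support a).Finite)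
    (s : ℕ) (hs : 1 ≤ s)
    (A : ℝ) (hA : A = ∑' ℓ, a ℓ)
    (M : ℝ) (hM : IsGreatest (Set.range a) M)
    (W : ℝ)
    (hW : W = ∑' ℓ : {ℓ : Fin s → ℕ //
        ∀ k (h : k + 1 < s), (ℓ ⟨k, by omega⟩ : ℕ) + 2 ≤ ℓ ⟨k + 1, h⟩},
      ∏ k : Fin s, a (ℓ.1 k)) :
    0 ≤ A ^ s - (Nat.factorial s : ℝ) * W ∧
    A ^ s - (Nat.factorial s : ℝ) * W ≤ 3 * (s : ℝ) ^ 2 * M * A ^ (s - 1) := by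
  classical
  have hM0 : 0 ≤ M := by
    have h := hM.2 ⟨0, rfl⟩
    rw [ha0] at h; exact h
  have haM : ∀ ℓ, a ℓ ≤ M := fun ℓ => hM.2 ⟨ℓ, rfl⟩
  set T : Finset ℕ := hfin.toFinset with hTdef
  have hT0 : ∀ ℓ, ℓ ∉ T → a ℓ = 0 := by
    intro ℓ h; by_contra h'; exact h (hfin.mem_toFinset.mpr h')
  have hAT : A = ∑ ℓ ∈ T, a ℓ := by rw [hA]; exact tsum_eq_sum (fun b hb => hT0 b hb)
  have hA0 : 0 ≤ A := by
    rw [hAT]; exact Finset.sum_nonneg fun i _ => ha i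
  set S : Finset (Fin s → ℕ) := Fintype.piFinset (fun _ => T) with hS
  have hprodpos : ∀ f : Fin s → ℕ, (0:ℝ) ≤ ∏ k, a (f k) :=
    fun f => Finset.prod_nonneg fun k _ => ha _
  have hAs : A ^ s = ∑ f ∈ S, ∏ k, a (f k) := by
    calc A ^ s = ∏ _k : Fin s, ∑ ℓ ∈ T, a ℓ := by
          rw [Finset.prod_const, Finset.card_univ, Fintype.card_fin, hAT]
      _ = ∑ f ∈ S, ∏ k, a (f k) := Finset.prod_univ_sum _ _
  set P : (Fin s → ℕ) → Prop :=
    fun ℓ => ∀ k (h : k + 1 < s), (ℓ ⟨k, by omega⟩ : ℕ) + 2 ≤ ℓ ⟨k + 1, h⟩ with hPdef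
  set Sep : (Fin s → ℕ) → Prop :=
    fun f => ∀ i j : Fin s, i ≠ j → f i + 2 ≤ f j ∨ f j + 2 ≤ f i with hSepdef
  -- P implies full separation on increasing pairs
  have hPsep : ∀ g : Fin s → ℕ, P g → ∀ i j : Fin s, i < j → g i + 2 ≤ g j := by
    intro g hg
    have key : ∀ n : ℕ, ∀ i j : Fin s, (j : ℕ) = (i : ℕ) + n + 1 → g i + 2 ≤ g j := by
      intro n
      induction n with
      | zero =>
        intro i j hij
        have h1 : (i : ℕ) + 1 < s := by have := j.isLt; omega
        have h := hg (i : ℕ) h1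
        have e1 : (⟨(i : ℕ), by omega⟩ : Fin s) = i := by ext; rfl
        have e2 : (⟨(i : ℕ) + 1, h1⟩ : Fin s) = j := by ext; simp; omega
        rwa [e1, e2] at h
      | succ n ih =>
        intro i j hij
        have hlt : (i : ℕ) + n + 1 < s := by have := j.isLt; omega
        set j' : Fin s := ⟨(i : ℕ) + n + 1, hlt⟩ with hj'
        have h1 := ih i j' rfl
        have h2 : (j' : ℕ) + 1 < s := by have := j.isLt; simp [hj']; omega
        have h := hg (j' : ℕ) h2
        have e1 : (⟨(j' : ℕ), by omega⟩ : Fin s) = j' := by ext; rfl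
        have e2 : (⟨(j' : ℕ) + 1, h2⟩ : Fin s) = j := by ext; simp [hj']; omega
        rw [e1, e2] at h
        omega
    intro i j hij
    exact key ((j : ℕ) - (i : ℕ) - 1) i j (by have := (Fin.lt_iff_val_lt_val).mp hij; omega)
  have hPmono : ∀ g : Fin s → ℕ, P g → StrictMono g := by
    intro g hg i j hij
    have := hPsep g hg i j hij; omega
  -- W as a finite sum
  have hWsum : W = ∑ g ∈ S.filter P, ∏ k, a (g k) := by
    rw [hW, tsum_eq_sum (s := S.subtype P) ?_]
    · exact Finset.sum_subtype_eq_sum_filter (f := fun g : Fin s → ℕ => ∏ k : Fin s, a (g k)) (p := P)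
    · intro b hb
      rw [Finset.mem_subtype] at hb
      have : ∃ k, b.1 k ∉ T := by
        by_contra hc
        push_neg at hc
        exact hb (Fintype.mem_piFinset.mpr hc)
      obtain ⟨k, hk⟩ := this
      exact Finset.prod_eq_zero (Finset.mem_univ k) (hT0 _ hk)
  -- s! * W as sum over separated tuples
  have hinj : ∀ f : Fin s → ℕ, Sep f → Function.Injective f := by
    intro f hf i j hij
    by_contra hne
    rcases hf i j hne with h | h <;> omega
  have hfW : (Nat.factorial s : ℝ) * W = ∑ f ∈ S.filter Sep, ∏ k, a (f k) := by
    rw [hWsum]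
    have step1 : (Nat.factorial s : ℝ) * ∑ g ∈ S.filter P, ∏ k, a (g k)
        = ∑ σ : Equiv.Perm (Fin s), ∑ g ∈ S.filter P, ∏ k, a (g (σ k)) := by
      have hc : ∀ σ : Equiv.Perm (Fin s), ∀ g : Fin s → ℕ,
          ∏ k, a (g (σ k)) = ∏ k, a (g k) := fun σ g => Equiv.prod_comp σ (fun x => a (g x))
      simp_rw [hc]
      rw [Finset.sum_const, Finset.card_univ, Fintype.card_perm, Fintype.card_fin,
        nsmul_eq_mul]
    rw [step1, ← Finset.sum_product']
    refine Finset.sum_nbij' (i := fun p => p.2 ∘ ⇑p.1)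
      (j := fun f => ((Tuple.sort f)⁻¹, f ∘ ⇑(Tuple.sort f))) ?_ ?_ ?_ ?_ ?_
    · -- maps into filter Sep
      rintro ⟨σ, g⟩ hp
      rw [Finset.mem_product] at hp
      rw [Finset.mem_filter] at hp ⊢
      have hgS := hp.2.1
      have hgP := hp.2.2
      constructor
      · rw [hS, Fintype.mem_piFinset] at hgS ⊢
        intro k; exact hgS (σ k)
      · intro i j hij
        have hσ : σ i ≠ σ j := fun h => hij (σ.injective h)
        rcases lt_or_gt_of_ne hσ with h | h
        · exact Or.inl (hPsep g hgP _ _ h)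
        · exact Or.inr (hPsep g hgP _ _ h)
    · -- inverse maps into product
      intro f hf
      rw [Finset.mem_filter] at hf
      obtain ⟨hfS, hfSep⟩ := hf
      rw [Finset.mem_product]
      refine ⟨Finset.mem_univ _, ?_⟩
      rw [Finset.mem_filter]
      have hmem : f ∘ ⇑(Tuple.sort f) ∈ S := by
        rw [hS, Fintype.mem_piFinset] at hfS ⊢
        intro k; exact hfS _
      refine ⟨hmem, ?_⟩
      have hmono : Monotone (f ∘ ⇑(Tuple.sort f)) := Tuple.monotone_sort f
      have hinj' : Function.Injective (f ∘ ⇑(Tuple.sort f)) :=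
        (hinj f hfSep).comp (Tuple.sort f).injective
      have hsm : StrictMono (f ∘ ⇑(Tuple.sort f)) := hmono.strictMono_of_injective hinj'
      intro k h
      have hlt : (⟨k, by omega⟩ : Fin s) < ⟨k + 1, h⟩ :=
        Fin.mk_lt_mk.mpr (Nat.lt_succ_self k)
      have hne : Tuple.sort f ⟨k, by omega⟩ ≠ Tuple.sort f ⟨k+1, h⟩ :=
        fun hc => (absurd ((Tuple.sort f).injective hc) (Fin.ne_of_lt hlt))
      rcases hfSep _ _ hne with hcase | hcase
      · exact hcase
      · exact absurd (hsm hlt) (by simp only [Function.comp_apply]; omega)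
    · -- left inverse
      rintro ⟨σ, g⟩ hp
      rw [Finset.mem_product, Finset.mem_filter] at hp
      have hgS := hp.2.1
      have hgP := hp.2.2
      have hgmono : Monotone g := (hPmono g hgP).monotone
      have hkey : (g ∘ ⇑σ) ∘ ⇑(Tuple.sort (g ∘ ⇑σ)) = g := by
        have := Tuple.comp_perm_comp_sort_eq_comp_sort (σ := σ) (f := g)
        rwa [(Tuple.sort_eq_refl_iff_monotone).mpr hgmono, Equiv.coe_refl,
          Function.comp_id] at this
      have hperm : σ * Tuple.sort (g ∘ ⇑σ) = 1 := by
        apply Equiv.ext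
        intro x
        have hx : g (σ (Tuple.sort (g ∘ ⇑σ) x)) = g x := congrFun hkey x
        have := (hPmono g hgP).injective hx
        simpa using this
      have hσ : (Tuple.sort (g ∘ ⇑σ))⁻¹ = σ :=
        (eq_inv_of_mul_eq_one_left hperm).symm
      rw [Prod.ext_iff]
      exact ⟨hσ, hkey⟩
    · -- right inverse
      intro f hf
      funext x
      simp [Equiv.Perm.coe_inv]
    · rintro ⟨σ, g⟩ _
      rfl
  -- split
  have hsplit : A ^ s - (Nat.factorial s : ℝ) * W
      = ∑ f ∈ S.filter (fun f => ¬ Sep f), ∏ k, a (f k) := by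
    rw [hAs, hfW, ← Finset.sum_filter_add_sum_filter_not S Sep (fun f => ∏ k, a (f k))]
    ring
  have hnonneg : 0 ≤ A ^ s - (Nat.factorial s : ℝ) * W := by
    rw [hsplit]
    exact Finset.sum_nonneg fun f _ => hprodpos f
  refine ⟨hnonneg, ?_⟩
  -- union bound
  set I : Finset ((Fin s × Fin s) × Fin 3) :=
    (Finset.univ.offDiag) ×ˢ (Finset.univ : Finset (Fin 3)) with hI
  set B : (Fin s × Fin s) × Fin 3 → Finset (Fin s → ℕ) :=
    fun p => S.filter (fun f => f p.1.2 + (p.2 : ℕ) = f p.1.1 + 1) with hB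
  have hsub : S.filter (fun f => ¬ Sep f) ⊆ I.biUnion B := by
    intro f hf
    rw [Finset.mem_filter] at hf
    obtain ⟨hfS, hfn⟩ := hf
    have hfn2 : ¬ ∀ i j : Fin s, i ≠ j → f i + 2 ≤ f j ∨ f j + 2 ≤ f i := hfn
    push_neg at hfn2
    obtain ⟨i, j, hij, h1, h2⟩ := hfn2
    have hd3 : f i + 1 - f j < 3 := by omega
    refine Finset.mem_biUnion.mpr ⟨((i, j), ⟨f i + 1 - f j, hd3⟩), ?_, ?_⟩
    · rw [hI, Finset.mem_product]
      exact ⟨Finset.mem_offDiag.mpr ⟨Finset.mem_univ _, Finset.mem_univ _, hij⟩,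
        Finset.mem_univ _⟩
    · rw [hB, Finset.mem_filter]
      exact ⟨hfS, by simp; omega⟩
  -- per-box bound
  have hbox : ∀ p ∈ I, ∑ f ∈ B p, ∏ k, a (f k) ≤ M * A ^ (s - 1) := by
    rintro ⟨⟨i, j⟩, d⟩ hp
    rw [hI, Finset.mem_product, Finset.mem_offDiag] at hp
    have hij : i ≠ j := hp.1.2.2
    have step1 : ∑ f ∈ B ((i, j), d), ∏ k, a (f k)
        ≤ M * ∑ f ∈ B ((i, j), d), ∏ k ∈ Finset.univ.erase j, a (f k) := by
      rw [Finset.mul_sum]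
      refine Finset.sum_le_sum fun f _ => ?_
      rw [← Finset.mul_prod_erase Finset.univ (fun k => a (f k)) (Finset.mem_univ j)]
      exact mul_le_mul_of_nonneg_right (haM _)
        (Finset.prod_nonneg fun k _ => ha _)
    have step2 : ∑ f ∈ B ((i, j), d), ∏ k ∈ Finset.univ.erase j, a (f k) ≤ A ^ (s - 1) := by
      set u : (Fin s → ℕ) → (Fin s → ℕ) := fun f => Function.update f j 0 with hu
      have hFu : ∀ f, ∏ k ∈ Finset.univ.erase j, a (u f k)
          = ∏ k ∈ Finset.univ.erase j, a (f k) := by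
        intro f
        refine Finset.prod_congr rfl fun k hk => ?_
        exact congrArg a (Function.update_of_ne (Finset.ne_of_mem_erase hk) 0 f)
      have hinjB : ∀ x ∈ B ((i, j), d), ∀ y ∈ B ((i, j), d), u x = u y → x = y := by
        intro x hx y hy hxy
        rw [hB, Finset.mem_filter] at hx hy
        have hoff : ∀ k, k ≠ j → x k = y k := by
          intro k hk
          have h5 : Function.update x j 0 k = Function.update y j 0 k := congrFun hxy k
          rwa [Function.update_of_ne hk, Function.update_of_ne hk] at h5
        funext k
        by_cases hk : k = j
        · subst hk
          have hxi : x k + (d : ℕ) = x i + 1 := hx.2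
          have hyi : y k + (d : ℕ) = y i + 1 := hy.2
          have hxyi : x i = y i := hoff i hij
          omega
        · exact hoff k hk
      have himgsub : (B ((i, j), d)).image u ⊆
          Fintype.piFinset (fun k => if k = j then ({0} : Finset ℕ) else T) := by
        intro h hh
        rw [Finset.mem_image] at hh
        obtain ⟨f, hf, rfl⟩ := hh
        rw [hB, Finset.mem_filter] at hf
        have hfS := hf.1
        rw [hS, Fintype.mem_piFinset] at hfS
        rw [Fintype.mem_piFinset]
        intro k
        by_cases hk : k = j
        · subst hk
          simp [hu]
        · rw [if_neg hk, hu]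
          simpa [Function.update_of_ne hk] using hfS k
      have heq0 : ∑ h ∈ Fintype.piFinset (fun k => if k = j then ({0} : Finset ℕ) else T),
          ∏ k ∈ Finset.univ.erase j, a (h k) = A ^ (s - 1) := by
        have hps := Finset.prod_univ_sum (fun k : Fin s => if k = j then ({0} : Finset ℕ) else T)
          (fun k x => if k = j then (1 : ℝ) else a x)
        have hlhs : ∏ k : Fin s, (∑ x ∈ (if k = j then ({0} : Finset ℕ) else T),
            if k = j then (1 : ℝ) else a x) = A ^ (s - 1) := by
          have : ∀ k : Fin s, (∑ x ∈ (if k = j then ({0} : Finset ℕ) else T),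
              if k = j then (1 : ℝ) else a x) = if k = j then (1 : ℝ) else A := by
            intro k
            by_cases hk : k = j
            · simp [hk]
            · simp [hk, hAT]
          rw [Finset.prod_congr rfl fun k _ => this k]
          rw [← Finset.mul_prod_erase Finset.univ _ (Finset.mem_univ j), if_pos rfl, one_mul]
          rw [Finset.prod_congr rfl fun k hk => if_neg (Finset.ne_of_mem_erase hk)]
          rw [Finset.prod_const, Finset.card_erase_of_mem (Finset.mem_univ j),
            Finset.card_univ, Fintype.card_fin]
        have hrhs : ∀ h : Fin s → ℕ, ∏ k : Fin s, (if k = j then (1 : ℝ) else a (h k))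
            = ∏ k ∈ Finset.univ.erase j, a (h k) := by
          intro h
          rw [← Finset.mul_prod_erase Finset.univ _ (Finset.mem_univ j), if_pos rfl, one_mul]
          exact Finset.prod_congr rfl fun k hk => if_neg (Finset.ne_of_mem_erase hk)
        rw [hlhs] at hps
        exact (Finset.sum_congr rfl fun h _ => (hrhs h).symm).trans hps.symm
      calc ∑ f ∈ B ((i, j), d), ∏ k ∈ Finset.univ.erase j, a (f k)
          = ∑ f ∈ B ((i, j), d), ∏ k ∈ Finset.univ.erase j, a (u f k) :=
            Finset.sum_congr rfl fun f _ => (hFu f).symm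
        _ = ∑ h ∈ (B ((i, j), d)).image u, ∏ k ∈ Finset.univ.erase j, a (h k) :=
            (Finset.sum_image (f := fun h => ∏ k ∈ Finset.univ.erase j, a (h k)) hinjB).symm
        _ ≤ ∑ h ∈ Fintype.piFinset (fun k => if k = j then ({0} : Finset ℕ) else T),
              ∏ k ∈ Finset.univ.erase j, a (h k) :=
            Finset.sum_le_sum_of_subset_of_nonneg himgsub
              (fun h _ _ => Finset.prod_nonneg fun k _ => ha _)
        _ = A ^ (s - 1) := heq0
    calc ∑ f ∈ B ((i, j), d), ∏ k, a (f k)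
        ≤ M * ∑ f ∈ B ((i, j), d), ∏ k ∈ Finset.univ.erase j, a (f k) := step1
      _ ≤ M * A ^ (s - 1) := mul_le_mul_of_nonneg_left step2 hM0
  -- combine
  have hMA0 : 0 ≤ M * A ^ (s - 1) := mul_nonneg hM0 (pow_nonneg hA0 _)
  have hcard : (I.card : ℝ) ≤ (s : ℝ) ^ 2 * 3 := by
    have hc2 : I.card = (s * s - s) * 3 := by
      rw [hI, Finset.card_product, Finset.offDiag_card]
      simp
    rw [hc2]
    have h1 : (s * s - s) * 3 ≤ s ^ 2 * 3 := by nlinarith [Nat.sub_le (s*s) s, sq s]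
    calc ((s * s - s) * 3 : ℕ) ≤ ((s ^ 2 * 3 : ℕ) : ℝ) := by exact_mod_cast h1
      _ = (s : ℝ) ^ 2 * 3 := by push_cast; ring
  calc A ^ s - (Nat.factorial s : ℝ) * W
      = ∑ f ∈ S.filter (fun f => ¬ Sep f), ∏ k, a (f k) := hsplit
    _ ≤ ∑ f ∈ I.biUnion B, ∏ k, a (f k) :=
        Finset.sum_le_sum_of_subset_of_nonneg hsub (fun f _ _ => hprodpos f)
    _ ≤ ∑ p ∈ I, ∑ f ∈ B p, ∏ k, a (f k) :=
        sum_biUnion_le_aux I B _ hprodpos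
    _ ≤ ∑ _p ∈ I, M * A ^ (s - 1) := Finset.sum_le_sum hbox
    _ = (I.card : ℝ) * (M * A ^ (s - 1)) := by rw [Finset.sum_const, nsmul_eq_mul]
    _ ≤ (s : ℝ) ^ 2 * 3 * (M * A ^ (s - 1)) := mul_le_mul_of_nonneg_right hcard hMA0
    _ = 3 * (s : ℝ) ^ 2 * M * A ^ (s - 1) := by ring
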